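/- For every k-HDM instance and every fractional solution x, the vector x/(2k) lies in the convex hull (in ℝ^𝓔) of the indicator vectors of integral solutions of the instance. -/

import Mathlib

open Finset

private lemma sum_filter_subset_eq {V : Type*} [DecidableEq V] {F M : Finset (Finset V)}
    (hM : M ⊆ F) (P : Finset V → Prop) [DecidablePred P] (g : Finset V → ℝ) :
    ∑ S ∈ M.filter P, g S = ∑ S ∈ F.filter P, (if S ∈ M then g S else 0) := by
  rw [← Finset.sum_filter]
  congr 1
  ext S
  simp only [Finset.mem_filter]
  constructor
  · rintro ⟨h1, h2⟩; exact ⟨⟨hM h1, h2⟩, h1⟩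
  · rintro ⟨⟨_, h2⟩, h1⟩; exact ⟨h1, h2⟩

private lemma sum_filter_subset_eq_int {V : Type*} [DecidableEq V] {F M : Finset (Finset V)}
    (hM : M ⊆ F) (P : Finset V → Prop) [DecidablePred P] (g : Finset V → ℤ) :
    ∑ S ∈ M.filter P, g S = ∑ S ∈ F.filter P, (if S ∈ M then g S else 0) := by
  rw [← Finset.sum_filter]
  congr 1
  ext S
  simp only [Finset.mem_filter]
  constructor
  · rintro ⟨h1, h2⟩; exact ⟨⟨hM h1, h2⟩, h1⟩
  · rintro ⟨⟨_, h2⟩, h1⟩; exact ⟨h1, h2⟩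

private lemma union_bound {ι α : Type*} [Fintype ι] [DecidableEq α] (w : ι → ℝ)
    (hw : ∀ i, 0 ≤ w i) (T : Finset α) (P : ι → α → Prop) [∀ i a, Decidable (P i a)] :
    ∑ i ∈ univ.filter (fun i => ∃ a ∈ T, P i a), w i
      ≤ ∑ a ∈ T, ∑ i ∈ univ.filter (fun i => P i a), w i := by
  classical
  have h : ∀ a, ∑ i ∈ univ.filter (fun i => P i a), w i = ∑ i, if P i a then w i else 0 := by
    intro a; rw [Finset.sum_filter]
  simp_rw [h]
  rw [Finset.sum_comm, Finset.sum_filter]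
  apply Finset.sum_le_sum
  intro i _
  by_cases hex : ∃ a ∈ T, P i a
  · rw [if_pos hex]
    obtain ⟨a, haT, hPa⟩ := hex
    calc w i = (if P i a then w i else 0) := by rw [if_pos hPa]
    _ ≤ ∑ a ∈ T, if P i a then w i else 0 :=
        Finset.single_le_sum (f := fun a => if P i a then w i else 0)
          (fun a _ => by by_cases h' : P i a <;> simp [h', hw i]) haT
  · rw [if_neg hex]
    exact Finset.sum_nonneg fun a _ => by by_cases h' : P i a <;> simp [h', hw i]

set_option maxHeartbeats 1000000 in
private theorem kHDM_key
    {V : Type*} [Fintype V] [DecidableEq V]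
    (k : ℕ) (hk : 1 ≤ k)
    (𝓔 : Finset (Finset V))
    (d : Finset V → ℤ) (b : V → ℤ)
    (hcard : ∀ S ∈ 𝓔, 1 ≤ S.card ∧ S.card ≤ k)
    (hd : ∀ S ∈ 𝓔, 1 ≤ d S)
    (hb : ∀ v : V, 1 ≤ b v)
    (hnoclip : ∀ S ∈ 𝓔, ∀ v ∈ S, d S ≤ b v)
    (x : {S : Finset V // S ∈ 𝓔} → ℝ)
    (hx0 : ∀ S, 0 ≤ x S) (hx1 : ∀ S, x S ≤ 1)
    (hxcap : ∀ v : V,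
      ∑ S : {S : Finset V // S ∈ 𝓔}, (if v ∈ S.1 then (d S.1 : ℝ) * x S else 0) ≤ (b v : ℝ)) :
    ∀ F : Finset (Finset V), F ⊆ 𝓔 →
    ∃ (n : ℕ) (w : Fin n → ℝ) (M : Fin n → Finset (Finset V)),
      (∀ i, 0 ≤ w i) ∧ (∑ i, w i = 1) ∧
      (∀ i, M i ⊆ F) ∧
      (∀ i (v : V), ∑ S ∈ (M i).filter (fun S => v ∈ S), d S ≤ b v) ∧
      (∀ e : {S : Finset V // S ∈ 𝓔},
        (if e.1 ∈ F then x e / (2 * (k : ℝ)) else 0)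
          = ∑ i, w i * (if e.1 ∈ M i then 1 else 0)) := by
  classical
  intro F
  induction F using Finset.strongInduction with
  | _ F IH =>
    intro hF𝓔
    -- the auxiliary function y
    set y : Finset V → ℝ := fun S => if h : S ∈ 𝓔 then x ⟨S, h⟩ else 0 with hy
    have hy0 : ∀ S, 0 ≤ y S := by
      intro S; by_cases h : S ∈ 𝓔 <;> simp [hy, h, hx0]
    have hyx : ∀ e : {S : Finset V // S ∈ 𝓔}, y e.1 = x e := by
      rintro ⟨S, h⟩; simp [hy, h]
    rcases F.eq_empty_or_nonempty with rfl | hne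
    · refine ⟨1, fun _ => 1, fun _ => ∅, fun _ => zero_le_one, by simp, fun _ => by simp,
        fun i v => by simpa using le_trans zero_le_one (hb v), fun e => by simp⟩
    obtain ⟨S₀, hS₀F, hmin⟩ := F.exists_min_image d hne
    have hS₀𝓔 : S₀ ∈ 𝓔 := hF𝓔 hS₀F
    set e₀ : {S : Finset V // S ∈ 𝓔} := ⟨S₀, hS₀𝓔⟩ with he₀
    set x₀ : ℝ := x e₀ with hx₀
    set d₀ : ℤ := d S₀ with hd₀
    set F' : Finset (Finset V) := F.erase S₀ with hF'
    have hF'F : F' ⊆ F := F.erase_subset S₀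
    have hF'𝓔 : F' ⊆ 𝓔 := hF'F.trans hF𝓔
    obtain ⟨n, w, M, hw0, hw1, hMsub, hMfeas, hrep⟩ :=
      IH F' (Finset.erase_ssubset hS₀F) hF'𝓔
    have hM𝓔 : ∀ i, M i ⊆ 𝓔 := fun i => (hMsub i).trans hF'𝓔
    have hkR : (1 : ℝ) ≤ (k : ℝ) := by exact_mod_cast hk
    have hkpos : (0 : ℝ) < (k : ℝ) := by linarith
    have hd₀1 : (1 : ℤ) ≤ d₀ := hd S₀ hS₀𝓔
    have hx₀0 : 0 ≤ x₀ := hx0 e₀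
    have hx₀1 : x₀ ≤ 1 := hx1 e₀
    set α : ℝ := x₀ / (2 * (k : ℝ)) with hα
    have hα0 : 0 ≤ α := by positivity
    -- loads
    set L : Fin n → V → ℤ := fun i v => ∑ S ∈ (M i).filter (fun S => v ∈ S), d S with hL
    have hL0 : ∀ i v, 0 ≤ L i v := by
      intro i v
      exact Finset.sum_nonneg fun S hS =>
        le_trans zero_le_one (hd S (hM𝓔 i (Finset.mem_filter.mp hS).1))
    set good : Fin n → Prop := fun i => ∀ v ∈ S₀, L i v + d₀ ≤ b v with hgood
    set G : ℝ := ∑ i ∈ univ.filter good, w i with hG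
    have hG0 : 0 ≤ G := Finset.sum_nonneg fun i _ => hw0 i
    -- weight identity
    have hweight : ∀ a ∈ F', ∑ i ∈ univ.filter (fun i => a ∈ M i), w i = y a / (2 * (k : ℝ)) := by
      intro a ha
      have ha𝓔 : a ∈ 𝓔 := hF'𝓔 ha
      have h1 := hrep ⟨a, ha𝓔⟩
      simp only [if_pos ha] at h1
      have h2 : y a = x ⟨a, ha𝓔⟩ := hyx ⟨a, ha𝓔⟩
      rw [Finset.sum_filter, h2, h1]
      exact Finset.sum_congr rfl fun i _ => by by_cases h : a ∈ M i <;> simp [h]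
    -- capacity: D + d₀ * x₀ ≤ b v  for v ∈ S₀
    have hdd : ((d₀ : ℤ) : ℝ) = ((d S₀ : ℤ) : ℝ) := rfl
    have hcap : ∀ v ∈ S₀,
        (∑ S ∈ F'.filter (fun S => v ∈ S), (d S : ℝ) * y S) + (d₀ : ℝ) * x₀ ≤ (b v : ℝ) := by
      intro v hv
      have h0 : ∑ S ∈ 𝓔, (if v ∈ S then (d S : ℝ) * y S else 0)
          = ∑ S : {S : Finset V // S ∈ 𝓔}, (if v ∈ S.1 then (d S.1 : ℝ) * x S else 0) := by
        rw [Finset.sum_subtype 𝓔 (fun _ => Iff.rfl)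
          (fun S => if v ∈ S then (d S : ℝ) * y S else 0)]
        exact Finset.sum_congr rfl fun e _ => by rw [hyx e]
      have h1 : ∑ S ∈ 𝓔.filter (fun S => v ∈ S), (d S : ℝ) * y S ≤ (b v : ℝ) := by
        rw [Finset.sum_filter, h0]
        exact hxcap v
      have h2 : insert S₀ (F'.filter (fun S => v ∈ S)) ⊆ 𝓔.filter (fun S => v ∈ S) := by
        intro S hS
        rcases Finset.mem_insert.mp hS with rfl | hS'
        · exact Finset.mem_filter.mpr ⟨hS₀𝓔, hv⟩
        · obtain ⟨h3, h4⟩ := Finset.mem_filter.mp hS'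
          exact Finset.mem_filter.mpr ⟨hF'𝓔 h3, h4⟩
      have h3 : S₀ ∉ F'.filter (fun S => v ∈ S) := fun h =>
        (Finset.mem_erase.mp (Finset.mem_filter.mp h).1).1 rfl
      have h4 : ∑ S ∈ insert S₀ (F'.filter (fun S => v ∈ S)), (d S : ℝ) * y S
          ≤ ∑ S ∈ 𝓔.filter (fun S => v ∈ S), (d S : ℝ) * y S := by
        refine Finset.sum_le_sum_of_subset_of_nonneg h2 fun S hS _ => ?_
        refine mul_nonneg ?_ (hy0 S)
        have := hd S (Finset.mem_filter.mp hS).1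
        exact_mod_cast le_trans zero_le_one this
      rw [Finset.sum_insert h3] at h4
      have h5 : y S₀ = x₀ := dif_pos hS₀𝓔
      rw [h5] at h4
      linarith [h1, h4, hdd]
    -- load average identity
    have hLavg : ∀ v : V, ∑ i, w i * (L i v : ℝ)
        = (∑ S ∈ F'.filter (fun S => v ∈ S), (d S : ℝ) * y S) / (2 * (k : ℝ)) := by
      intro v
      have h1 : ∀ i, w i * ((L i v : ℤ) : ℝ)
          = ∑ S ∈ F'.filter (fun S => v ∈ S), (if S ∈ M i then w i * (d S : ℝ) else 0) := by
        intro i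
        have h2 : ((L i v : ℤ) : ℝ) = ∑ S ∈ (M i).filter (fun S => v ∈ S), ((d S : ℤ) : ℝ) := by
          rw [show L i v = ∑ S ∈ (M i).filter (fun S => v ∈ S), d S from rfl]
          push_cast
          rfl
        rw [h2, Finset.mul_sum]
        exact sum_filter_subset_eq (hMsub i) (fun S => v ∈ S) (fun S => w i * (d S : ℝ))
      calc ∑ i, w i * (L i v : ℝ)
          = ∑ i, ∑ S ∈ F'.filter (fun S => v ∈ S),
              (if S ∈ M i then w i * (d S : ℝ) else 0) :=
            Finset.sum_congr rfl fun i _ => h1 i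
        _ = ∑ S ∈ F'.filter (fun S => v ∈ S), ∑ i,
              (if S ∈ M i then w i * (d S : ℝ) else 0) := Finset.sum_comm
        _ = ∑ S ∈ F'.filter (fun S => v ∈ S),
              (d S : ℝ) * ∑ i ∈ univ.filter (fun i => S ∈ M i), w i := by
            refine Finset.sum_congr rfl fun S _ => ?_
            rw [Finset.sum_filter, Finset.mul_sum]
            exact Finset.sum_congr rfl fun i _ => by
              by_cases h : S ∈ M i <;> simp [h, mul_comm]
        _ = ∑ S ∈ F'.filter (fun S => v ∈ S), (d S : ℝ) * (y S / (2 * (k : ℝ))) := by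
            refine Finset.sum_congr rfl fun S hS => ?_
            rw [hweight S (Finset.mem_filter.mp hS).1]
        _ = (∑ S ∈ F'.filter (fun S => v ∈ S), (d S : ℝ) * y S) / (2 * (k : ℝ)) := by
            rw [Finset.sum_div]
            exact Finset.sum_congr rfl fun S _ => by ring
    -- per-vertex bad weight bound
    have hbadv : ∀ v ∈ S₀,
        (∑ i ∈ univ.filter (fun i => (b v : ℤ) - d₀ < L i v), w i) * (2 * (k:ℝ) * (k:ℝ))
          ≤ 2 * (k:ℝ) - x₀ := by
      intro v hv
      have hd₀b : d₀ ≤ b v := hnoclip S₀ hS₀𝓔 v hv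
      have hd₀R : (1:ℝ) ≤ (d₀:ℝ) := by exact_mod_cast hd₀1
      have hd₀pos : (0:ℝ) < (d₀:ℝ) := by linarith
      have hbdR : (d₀:ℝ) ≤ (b v : ℝ) := by exact_mod_cast hd₀b
      have hDcap := hcap v hv
      have hD0 : 0 ≤ ∑ S ∈ F'.filter (fun S => v ∈ S), (d S : ℝ) * y S := by
        refine Finset.sum_nonneg fun S hS => mul_nonneg ?_ (hy0 S)
        have := hd S (hF'𝓔 (Finset.mem_filter.mp hS).1)
        exact_mod_cast le_trans zero_le_one this
      have hBad0 : 0 ≤ ∑ i ∈ univ.filter (fun i => (b v : ℤ) - d₀ < L i v), w i :=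
        Finset.sum_nonneg fun i _ => hw0 i
      by_cases hcase : 2 * d₀ ≤ b v
      · -- Markov case
        have hmark : (∑ i ∈ univ.filter (fun i => (b v : ℤ) - d₀ < L i v), w i)
            * ((b v : ℝ) - (d₀:ℝ) + 1) ≤ ∑ i, w i * (L i v : ℝ) := by
          rw [Finset.sum_mul]
          calc ∑ i ∈ univ.filter (fun i => (b v : ℤ) - d₀ < L i v),
                w i * ((b v : ℝ) - (d₀:ℝ) + 1)
              ≤ ∑ i ∈ univ.filter (fun i => (b v : ℤ) - d₀ < L i v), w i * (L i v : ℝ) := by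
                refine Finset.sum_le_sum fun i hi => ?_
                have h6 := (Finset.mem_filter.mp hi).2
                have h7 : (b v : ℝ) - (d₀:ℝ) + 1 ≤ (L i v : ℝ) := by
                  exact_mod_cast (by omega : b v - d₀ + 1 ≤ L i v)
                exact mul_le_mul_of_nonneg_left h7 (hw0 i)
            _ ≤ ∑ i, w i * (L i v : ℝ) := by
                refine Finset.sum_le_sum_of_subset_of_nonneg (Finset.filter_subset _ _)
                  fun i _ _ => mul_nonneg (hw0 i) ?_
                exact_mod_cast hL0 i v
        rw [hLavg v] at hmark
        have h2kpos : (0:ℝ) < 2 * (k:ℝ) := by linarith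
        have h7 : (∑ i ∈ univ.filter (fun i => (b v : ℤ) - d₀ < L i v), w i)
            * ((b v : ℝ) - (d₀:ℝ) + 1) * (2 * (k:ℝ))
            ≤ ∑ S ∈ F'.filter (fun S => v ∈ S), (d S : ℝ) * y S :=
          (le_div_iff₀ h2kpos).mp hmark
        have hkey : (k:ℝ) * ((b v : ℝ) - (d₀:ℝ) * x₀)
            ≤ (2 * (k:ℝ) - x₀) * ((b v : ℝ) - (d₀:ℝ) + 1) := by
          have c1 : 2 * (d₀:ℝ) ≤ (b v : ℝ) := by exact_mod_cast hcase
          nlinarith [mul_nonneg (sub_nonneg.mpr hx₀1)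
              (by nlinarith : (0:ℝ) ≤ (k:ℝ) * ((b v : ℝ) - 2*(d₀:ℝ) + 2)),
            mul_nonneg hx₀0
              (by nlinarith : (0:ℝ) ≤ ((k:ℝ) - 1) * ((b v : ℝ) - (d₀:ℝ)) + 2*(k:ℝ) - 1)]
        have hbd1 : (0:ℝ) < (b v : ℝ) - (d₀:ℝ) + 1 := by linarith
        have hfin : (∑ i ∈ univ.filter (fun i => (b v : ℤ) - d₀ < L i v), w i)
            * (2 * (k:ℝ) * (k:ℝ)) * ((b v : ℝ) - (d₀:ℝ) + 1)
            ≤ (2 * (k:ℝ) - x₀) * ((b v : ℝ) - (d₀:ℝ) + 1) := by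
          nlinarith [mul_le_mul_of_nonneg_left h7 hkpos.le,
            mul_le_mul_of_nonneg_left (by linarith [hDcap] :
              (∑ S ∈ F'.filter (fun S => v ∈ S), (d S : ℝ) * y S)
                ≤ (b v : ℝ) - (d₀:ℝ) * x₀) hkpos.le,
            hkey]
        exact le_of_mul_le_mul_right hfin hbd1
      · -- big demand case
        push_neg at hcase
        have himp : ∀ i, ((b v : ℤ) - d₀ < L i v) →
            ∃ a ∈ F'.filter (fun S => v ∈ S), a ∈ M i := by
          intro i hLi
          by_contra hno
          push_neg at hno
          have hzero : L i v = 0 := by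
            have h0 : L i v = ∑ S ∈ F'.filter (fun S => v ∈ S), (if S ∈ M i then d S else 0) :=
              sum_filter_subset_eq_int (hMsub i) (fun S => v ∈ S) d
            rw [h0]
            exact Finset.sum_eq_zero fun S hS => if_neg (hno S hS)
          rw [hzero] at hLi
          omega
        have hsubset : univ.filter (fun i => (b v : ℤ) - d₀ < L i v)
            ⊆ univ.filter (fun i => ∃ a ∈ F'.filter (fun S => v ∈ S), a ∈ M i) := by
          intro i hi
          simp only [Finset.mem_filter, Finset.mem_univ, true_and] at *
          exact himp i hi
        have hub := union_bound w hw0 (F'.filter (fun S => v ∈ S)) (fun i a => a ∈ M i)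
        have h8 : ∑ i ∈ univ.filter (fun i => (b v : ℤ) - d₀ < L i v), w i
            ≤ ∑ a ∈ F'.filter (fun S => v ∈ S), y a / (2 * (k:ℝ)) := by
          calc ∑ i ∈ univ.filter (fun i => (b v : ℤ) - d₀ < L i v), w i
              ≤ ∑ i ∈ univ.filter
                  (fun i => ∃ a ∈ F'.filter (fun S => v ∈ S), a ∈ M i), w i :=
                Finset.sum_le_sum_of_subset_of_nonneg hsubset fun i _ _ => hw0 i
            _ ≤ ∑ a ∈ F'.filter (fun S => v ∈ S),
                  ∑ i ∈ univ.filter (fun i => a ∈ M i), w i := hub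
            _ = ∑ a ∈ F'.filter (fun S => v ∈ S), y a / (2 * (k:ℝ)) :=
                Finset.sum_congr rfl fun a ha => hweight a (Finset.mem_filter.mp ha).1
        have h9 : (d₀:ℝ) * (∑ a ∈ F'.filter (fun S => v ∈ S), y a)
            ≤ ∑ S ∈ F'.filter (fun S => v ∈ S), (d S : ℝ) * y S := by
          rw [Finset.mul_sum]
          refine Finset.sum_le_sum fun a ha => ?_
          have hda : d₀ ≤ d a := hmin a (hF'F (Finset.mem_filter.mp ha).1)
          have : (d₀:ℝ) ≤ (d a : ℝ) := by exact_mod_cast hda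
          exact mul_le_mul_of_nonneg_right this (hy0 a)
        have hT0 : 0 ≤ ∑ a ∈ F'.filter (fun S => v ∈ S), y a :=
          Finset.sum_nonneg fun a _ => hy0 a
        have h2kpos : (0:ℝ) < 2 * (k:ℝ) := by linarith
        have h8' : (∑ i ∈ univ.filter (fun i => (b v : ℤ) - d₀ < L i v), w i) * (2 * (k:ℝ))
            ≤ ∑ a ∈ F'.filter (fun S => v ∈ S), y a := by
          rw [← Finset.sum_div] at h8
          exact (le_div_iff₀ h2kpos).mp h8
        have hkey2 : (k:ℝ) * ((b v : ℝ) - (d₀:ℝ) * x₀) ≤ (2 * (k:ℝ) - x₀) * (d₀:ℝ) := by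
          have c1' : b v + 1 ≤ 2 * d₀ := Int.lt_iff_add_one_le.mp hcase
          have c1 : (b v : ℝ) + 1 ≤ 2 * (d₀:ℝ) := by exact_mod_cast c1'
          nlinarith [mul_nonneg (mul_nonneg hx₀0 hd₀pos.le) (by linarith : (0:ℝ) ≤ (k:ℝ) - 1)]
        have hDle : ∑ S ∈ F'.filter (fun S => v ∈ S), (d S : ℝ) * y S
            ≤ (b v : ℝ) - (d₀:ℝ) * x₀ := by linarith [hDcap]
        have hfin : (∑ i ∈ univ.filter (fun i => (b v : ℤ) - d₀ < L i v), w i)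
            * (2 * (k:ℝ) * (k:ℝ)) * (d₀:ℝ) ≤ (2 * (k:ℝ) - x₀) * (d₀:ℝ) := by
          nlinarith [mul_le_mul_of_nonneg_left h8' (mul_nonneg hkpos.le hd₀pos.le),
            mul_le_mul_of_nonneg_left (le_trans h9 hDle) hkpos.le,
            hkey2]
        exact le_of_mul_le_mul_right hfin hd₀pos
    -- key inequality α ≤ G
    have hαG : α ≤ G := by
      have heq2 : univ.filter (fun i => ¬ good i)
          = univ.filter (fun i => ∃ v ∈ S₀, (b v : ℤ) - d₀ < L i v) := by
        refine Finset.filter_congr fun i _ => ?_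
        simp only [hgood]
        constructor
        · intro h
          push_neg at h
          obtain ⟨v, hv, hlt⟩ := h
          exact ⟨v, hv, by omega⟩
        · rintro ⟨v, hv, hlt⟩ h
          have := h v hv
          omega
      have hBsum : ∑ i ∈ univ.filter (fun i => ¬ good i), w i
          ≤ ∑ v ∈ S₀, ∑ i ∈ univ.filter (fun i => (b v : ℤ) - d₀ < L i v), w i := by
        rw [heq2]
        exact union_bound w hw0 S₀ (fun i v => (b v : ℤ) - d₀ < L i v)
      have hb0 : (0:ℝ) ≤ (2 * (k:ℝ) - x₀) / (2 * (k:ℝ) * (k:ℝ)) := by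
        apply div_nonneg _ (by positivity)
        linarith
      have h2 : ∑ v ∈ S₀, ∑ i ∈ univ.filter (fun i => (b v : ℤ) - d₀ < L i v), w i
          ≤ (S₀.card : ℝ) * ((2 * (k:ℝ) - x₀) / (2 * (k:ℝ) * (k:ℝ))) := by
        rw [← nsmul_eq_mul]
        refine Finset.sum_le_card_nsmul S₀ _ _ fun v hv => ?_
        have := hbadv v hv
        rw [le_div_iff₀ (by positivity)]
        linarith
      have hcard₀ : (S₀.card : ℝ) ≤ (k:ℝ) := by exact_mod_cast (hcard S₀ hS₀𝓔).2
      have hGB : G + ∑ i ∈ univ.filter (fun i => ¬ good i), w i = 1 := by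
        rw [hG, Finset.sum_filter_add_sum_filter_not univ good w]
        exact hw1
      have hB' : ∑ i ∈ univ.filter (fun i => ¬ good i), w i
          ≤ (k:ℝ) * ((2 * (k:ℝ) - x₀) / (2 * (k:ℝ) * (k:ℝ))) := by
        refine le_trans hBsum (le_trans h2 ?_)
        exact mul_le_mul_of_nonneg_right hcard₀ hb0
      have hsimp : (k:ℝ) * ((2 * (k:ℝ) - x₀) / (2 * (k:ℝ) * (k:ℝ))) = 1 - α := by
        rw [hα]
        field_simp
      rw [hsimp] at hB'
      linarith [hGB, hB']
    -- construction
    set μ : Fin n → ℝ := fun i => if good i then (α / G) * w i else 0 with hμ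
    have hμ0 : ∀ i, 0 ≤ μ i := by
      intro i
      by_cases hg : good i
      · have h1 : μ i = (α / G) * w i := if_pos hg
        rw [h1]
        exact mul_nonneg (div_nonneg hα0 hG0) (hw0 i)
      · have h1 : μ i = 0 := if_neg hg
        rw [h1]
    have hμw : ∀ i, μ i ≤ w i := by
      intro i
      by_cases hg : good i
      · rcases eq_or_lt_of_le hG0 with hGeq | hGpos
        · have hwi : w i ≤ G := by
            rw [hG]
            exact Finset.single_le_sum (fun j _ => hw0 j)
              (Finset.mem_filter.mpr ⟨Finset.mem_univ i, hg⟩)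
          have hwi0 : w i = 0 := le_antisymm (by rw [← hGeq] at hwi; exact hwi) (hw0 i)
          have h1 : μ i = (α / G) * w i := if_pos hg
          rw [h1, hwi0, mul_zero]
        · have hle : α / G ≤ 1 := (div_le_one hGpos).mpr hαG
          have h1 : μ i = (α / G) * w i := if_pos hg
          calc μ i = (α / G) * w i := h1
          _ ≤ 1 * w i := mul_le_mul_of_nonneg_right hle (hw0 i)
          _ = w i := one_mul _
      · have h1 : μ i = 0 := if_neg hg
        rw [h1]; exact hw0 i
    have hμsum : ∑ i, μ i = α := by
      have h1 : ∑ i, μ i = (α / G) * G := by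
        calc ∑ i, μ i = ∑ i ∈ univ.filter good, (α / G) * w i := by
              rw [Finset.sum_filter]
        _ = (α / G) * ∑ i ∈ univ.filter good, w i := by rw [Finset.mul_sum]
        _ = (α / G) * G := by rw [← hG]
      rcases eq_or_lt_of_le hG0 with hGeq | hGpos
      · have hα0' : α = 0 := le_antisymm (by rw [hGeq]; exact hαG) hα0
        rw [h1, hα0', zero_div, zero_mul]
      · rw [h1, div_mul_cancel₀ _ (ne_of_gt hGpos)]
    -- new family
    have hS₀M : ∀ i, S₀ ∉ M i := fun i h => (Finset.mem_erase.mp (hMsub i h)).1 rfl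
    have hsum2 : ∀ g : Fin n ⊕ Fin n → ℝ,
        ∑ j : Fin (n + n), g (finSumFinEquiv.symm j)
          = (∑ i, g (Sum.inl i)) + ∑ i, g (Sum.inr i) := by
      intro g
      rw [Equiv.sum_comp finSumFinEquiv.symm g, Fintype.sum_sum_type]
    refine ⟨n + n,
      (Sum.elim (fun i => w i - μ i) μ) ∘ finSumFinEquiv.symm,
      (Sum.elim M (fun i => if good i then insert S₀ (M i) else M i)) ∘ finSumFinEquiv.symm,
      ?_, ?_, ?_, ?_, ?_⟩
    · intro j
      simp only [Function.comp_apply]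
      rcases hj : finSumFinEquiv.symm j with i | i
      · simp only [Sum.elim_inl]
        linarith [hμw i]
      · simp only [Sum.elim_inr]
        exact hμ0 i
    · simp only [Function.comp_apply]
      rw [hsum2 (Sum.elim (fun i => w i - μ i) μ)]
      simp only [Sum.elim_inl, Sum.elim_inr]
      rw [Finset.sum_sub_distrib, hw1, hμsum]
      ring
    · intro j S hS
      simp only [Function.comp_apply] at hS
      rcases hj : finSumFinEquiv.symm j with i | i
      · rw [hj, Sum.elim_inl] at hS
        exact hF'F (hMsub i hS)
      · rw [hj, Sum.elim_inr] at hS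
        by_cases hg : good i
        · rw [if_pos hg] at hS
          rcases Finset.mem_insert.mp hS with rfl | h
          · exact hS₀F
          · exact hF'F (hMsub i h)
        · rw [if_neg hg] at hS
          exact hF'F (hMsub i hS)
    · intro j v
      simp only [Function.comp_apply]
      rcases hj : finSumFinEquiv.symm j with i | i
      · simp only [Sum.elim_inl]
        exact hMfeas i v
      · simp only [Sum.elim_inr]
        by_cases hg : good i
        · rw [if_pos hg]
          by_cases hv : v ∈ S₀
          · rw [Finset.filter_insert, if_pos hv,
              Finset.sum_insert (fun h => hS₀M i (Finset.mem_filter.mp h).1)]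
            have h1 := hg v hv
            have h2 : L i v = ∑ S ∈ (M i).filter (fun S => v ∈ S), d S := rfl
            rw [h2] at h1
            linarith
          · rw [Finset.filter_insert, if_neg hv]
            exact hMfeas i v
        · rw [if_neg hg]
          exact hMfeas i v
    · intro e
      simp only [Function.comp_apply]
      rw [hsum2 (fun s => (Sum.elim (fun i => w i - μ i) μ s) *
        (if e.1 ∈ (Sum.elim M (fun i => if good i then insert S₀ (M i) else M i) s)
          then 1 else 0))]
      simp only [Sum.elim_inl, Sum.elim_inr]
      change _ = (∑ i, (w i - μ i) * (if e.1 ∈ M i then (1:ℝ) else 0))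
        + ∑ i, μ i * (if e.1 ∈ (if good i then insert S₀ (M i) else M i) then (1:ℝ) else 0)
      by_cases hcase : e.1 = S₀
      · have hee : e = e₀ := Subtype.ext hcase
        have hLHS : (if e.1 ∈ F then x e / (2 * (k : ℝ)) else 0) = α := by
          rw [if_pos (hcase ▸ hS₀F), hee]
        rw [hLHS]
        have hsum1 : ∑ i, (w i - μ i) * (if e.1 ∈ M i then (1:ℝ) else 0) = 0 :=
          Finset.sum_eq_zero fun i _ => by
            rw [if_neg (fun h => hS₀M i (hcase ▸ h)), mul_zero]
        have hsum2' : ∑ i, μ i * (if e.1 ∈ (if good i then insert S₀ (M i) else M i)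
            then (1:ℝ) else 0) = α := by
          rw [← hμsum]
          refine Finset.sum_congr rfl fun i _ => ?_
          by_cases hg : good i
          · rw [if_pos hg, if_pos (Finset.mem_insert.mpr (Or.inl hcase)), mul_one]
          · have h1 : μ i = 0 := if_neg hg
            rw [h1, zero_mul]
        rw [hsum1, hsum2', zero_add]
      · have hJ : ∀ i, (if e.1 ∈ (if good i then insert S₀ (M i) else M i) then (1:ℝ) else 0)
            = (if e.1 ∈ M i then 1 else 0) := by
          intro i
          by_cases hg : good i
          · rw [if_pos hg]
            congr 1
            simp [Finset.mem_insert, hcase]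
          · rw [if_neg hg]
        simp only [hJ]
        have hcomb : (∑ i, (w i - μ i) * (if e.1 ∈ M i then (1:ℝ) else 0))
            + ∑ i, μ i * (if e.1 ∈ M i then (1:ℝ) else 0)
            = ∑ i, w i * (if e.1 ∈ M i then (1:ℝ) else 0) := by
          rw [← Finset.sum_add_distrib]
          exact Finset.sum_congr rfl fun i _ => by ring
        rw [hcomb, ← hrep e]
        have hmem : (e.1 ∈ F') ↔ (e.1 ∈ F) := by
          rw [Finset.mem_erase]
          exact ⟨fun h => h.2, fun h => ⟨hcase, h⟩⟩
        by_cases hF : e.1 ∈ F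
        · rw [if_pos hF, if_pos (hmem.mpr hF)]
        · rw [if_neg hF, if_neg (fun h => hF (hmem.mp h))]

theorem kHDM_half_2k_in_convexHull
    {V : Type*} [Fintype V] [DecidableEq V]
    (k : ℕ) (hk : 1 ≤ k)
    (𝓔 : Finset (Finset V))
    (d : Finset V → ℤ) (b : V → ℤ)
    (hcard : ∀ S ∈ 𝓔, 1 ≤ S.card ∧ S.card ≤ k)
    (hd : ∀ S ∈ 𝓔, 1 ≤ d S)
    (hb : ∀ v : V, 1 ≤ b v)
    (hnoclip : ∀ S ∈ 𝓔, ∀ v ∈ S, d S ≤ b v)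
    (x : {S : Finset V // S ∈ 𝓔} → ℝ)
    (hx0 : ∀ S, 0 ≤ x S) (hx1 : ∀ S, x S ≤ 1)
    (hxcap : ∀ v : V,
      ∑ S : {S : Finset V // S ∈ 𝓔}, (if v ∈ S.1 then (d S.1 : ℝ) * x S else 0) ≤ (b v : ℝ)) :
    (fun S => x S / (2 * k)) ∈
      convexHull ℝ {χ : {S : Finset V // S ∈ 𝓔} → ℝ |
        ∃ M : Finset (Finset V), M ⊆ 𝓔 ∧
          (∀ v : V, ∑ S ∈ M.filter (fun S => v ∈ S), d S ≤ b v) ∧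
          χ = fun S => if S.1 ∈ M then 1 else 0} := by
  classical
  obtain ⟨n, w, M, hw0, hw1, hsub, hfeas, hrep⟩ :=
    kHDM_key k hk 𝓔 d b hcard hd hb hnoclip x hx0 hx1 hxcap 𝓔 subset_rfl
  have heq : (fun S => x S / (2 * (k:ℝ)))
      = Finset.centerMass univ w (fun i => (fun S : {S : Finset V // S ∈ 𝓔} =>
          if S.1 ∈ M i then (1:ℝ) else 0)) := by
    rw [Finset.centerMass, hw1, inv_one, one_smul]
    funext S
    rw [Finset.sum_apply]
    simpa [S.2] using hrep S
  rw [heq]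
  exact Finset.centerMass_mem_convexHull _ (fun i _ => hw0 i) (by rw [hw1]; norm_num)
    (fun i _ => ⟨M i, hsub i, hfeas i, rfl⟩)
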